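/- Let λ be a complex number with |λ| = 1. A nonzero bounded linear operator X on the Hardy space H²(𝔻) satisfies BX = λXB (i.e., X is an extended λ-eigenoperator of the backward shift B) if and only if X = R_λ φ(B) for some φ ∈ H^∞(𝔻), where R_λ is the dilation operator and φ(B) is the element of the commutant of B with symbol φ. -/

import Mathlib

open Complex Metric Filter Topology ComplexConjugate

noncomputable section

/-- The Hardy space `H²(𝔻)`, modeled via Taylor coefficients as the sequence space `ℓ²`:
an analytic function `f(z) = Σ aₙ zⁿ` on the unit disk with `Σ |aₙ|² < ∞` is identified
with its coefficient sequence. -/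
abbrev H2 := lp (fun _ : ℕ => ℂ) 2

/-- The analytic function on the unit disk represented by an element of `H²`. -/
def H2.toFun (f : H2) (z : ℂ) : ℂ := ∑' n : ℕ, f n * z ^ n

/-- `B` is the backward shift `(Bf)(z) = (f(z) - f(0))/z`, i.e. on Taylor coefficients
`(Bf)ₙ = f_{n+1}`. -/
def IsBackwardShift (B : H2 →L[ℂ] H2) : Prop :=
  ∀ (f : H2) (n : ℕ), B f n = f (n + 1)

/-- `R` is the dilation operator `(R_λ f)(z) = f(λ z)`, i.e. on Taylor coefficients
`(R_λ f)ₙ = λⁿ fₙ`. -/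
def IsDilation (lam : ℂ) (R : H2 →L[ℂ] H2) : Prop :=
  ∀ (f : H2) (n : ℕ), R f n = lam ^ n * f n

/-- `φ ∈ H^∞(𝔻)`: a bounded analytic function on the open unit disk. -/
def InHinf (φ : ℂ → ℂ) : Prop :=
  DifferentiableOn ℂ φ (ball (0:ℂ) 1) ∧ ∃ M : ℝ, ∀ z ∈ ball (0:ℂ) 1, ‖φ z‖ ≤ M

/-- `Φ = φ(B)`, the coanalytic Toeplitz operator `M_{φ̄}⋆` with symbol `φ`: there is a
Taylor coefficient sequence `c` for `φ` on the disk such that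
`(Φ f)ₙ = Σ_k c_k f_{n+k}` (equivalently `Φ = Σ_k c_k B^k`). -/
def IsCoToeplitz (φ : ℂ → ℂ) (Φ : H2 →L[ℂ] H2) : Prop :=
  ∃ c : ℕ → ℂ,
    (∀ z ∈ ball (0:ℂ) 1, HasSum (fun k => c k * z ^ k) (φ z)) ∧
    (∀ (f : H2) (n : ℕ), HasSum (fun k => c k * f (n + k)) (Φ f n))

/-- An operator `T` is hypercyclic if some vector has dense orbit `{Tⁿ x : n ∈ ℕ}`. -/
def Hypercyclic (T : H2 →L[ℂ] H2) : Prop :=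
  ∃ x : H2, Dense (Set.range fun n : ℕ => (T ^ n) x)

/-- An operator `T` is supercyclic if for some vector `x` the set of scalar multiples
`{μ Tⁿ x : μ ∈ ℂ, n ∈ ℕ}` is dense. -/
def Supercyclic (T : H2 →L[ℂ] H2) : Prop :=
  ∃ x : H2, Dense {y : H2 | ∃ (μ : ℂ) (n : ℕ), y = μ • (T ^ n) x}

/-- `φ̄(z) = conj (φ (conj z))`. -/
def conjSymb (φ : ℂ → ℂ) (z : ℂ) : ℂ := conj (φ (conj z))

/-- `λ` is an irrational rotation: `|λ| = 1` and `λ` is not a root of unity. -/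
def IsIrrationalRotation (lam : ℂ) : Prop :=
  ‖lam‖ = 1 ∧ ∀ n : ℕ, 0 < n → lam ^ n ≠ 1

/-- `Ψ_n(z) = φ̄(z)·φ̄(αz)⋯φ̄(α^{n-1}z)` where `α = conj λ`. -/
def psiProd (φ : ℂ → ℂ) (lam : ℂ) (n : ℕ) (z : ℂ) : ℂ :=
  ∏ j ∈ Finset.range n, conjSymb φ ((conj lam) ^ j * z)

/-- `Ω_n(z) = φ̄(ωz)·φ̄(ω²z)⋯φ̄(ωⁿz)` where `ω = 1/conj λ`. -/
def omegaProd (φ : ℂ → ℂ) (lam : ℂ) (n : ℕ) (z : ℂ) : ℂ :=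
  ∏ j ∈ Finset.range n, conjSymb φ (((conj lam)⁻¹) ^ (j + 1) * z)

lemma memℓp_geom {a : ℂ} (ha : ‖a‖ < 1) : Memℓp (fun n : ℕ => (conj a) ^ n) 2 := by
  apply memℓp_gen
  have hs : Summable fun n : ℕ => (‖a‖ ^ 2) ^ n :=
    summable_geometric_of_lt_one (by positivity) (by nlinarith [norm_nonneg a])
  refine hs.congr fun n => ?_
  rw [norm_pow]
  simp only [RCLike.norm_conj]
  rw [ENNReal.toReal_ofNat, Real.rpow_two]
  ring

/-- The reproducing kernel `k_a(z) = 1/(1 - conj(a) z) = Σ (conj a)ⁿ zⁿ` of `H²(𝔻)`,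
as an element of `H²` (junk value `0` if `a` is outside the unit disk). -/
def kernelVec (a : ℂ) : H2 :=
  if ha : ‖a‖ < 1 then ⟨fun n => (conj a) ^ n, memℓp_geom ha⟩ else 0

/-- `T` satisfies the Hypercyclicity Criterion for the sequence `(n_k)`. -/
def SatisfiesHCCriterion (T : H2 →L[ℂ] H2) (nk : ℕ → ℕ) : Prop :=
  ∃ (X₀ Y₀ : Set H2) (S : ℕ → H2 → H2),
    Dense X₀ ∧ Dense Y₀ ∧
    (∀ x ∈ X₀, Tendsto (fun k => (T ^ nk k) x) atTop (𝓝 0)) ∧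
    (∀ y ∈ Y₀, Tendsto (fun k => S k y) atTop (𝓝 0)) ∧
    (∀ y ∈ Y₀, Tendsto (fun k => (T ^ nk k) (S k y)) atTop (𝓝 y))

/-- A family `F` of functions is normal at `z₀`: on some open neighborhood of `z₀`,
every (sub)sequence of the family has a locally uniformly convergent subsequence. -/
def NormalAt (F : ℕ → ℂ → ℂ) (z₀ : ℂ) : Prop :=
  ∃ U : Set ℂ, IsOpen U ∧ z₀ ∈ U ∧
    ∀ g : ℕ → ℕ, StrictMono g →
      ∃ (h : ℕ → ℕ) (f : ℂ → ℂ), StrictMono h ∧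
        TendstoLocallyUniformlyOn (fun j => F (g (h j))) f atTop U

/-- The family `{F n : n ≥ 1}` is uniformly bounded on compact subsets of the unit disk. -/
def UnifBddOnCompacts (F : ℕ → ℂ → ℂ) : Prop :=
  ∀ K : Set ℂ, K ⊆ ball (0:ℂ) 1 → IsCompact K →
    ∃ M : ℝ, ∀ n : ℕ, 1 ≤ n → ∀ z ∈ K, ‖F n z‖ ≤ M


open scoped ENNReal NNReal

section StmtAux

lemma h2_toReal_pos : (0:ℝ) < (2 : ℝ≥0∞).toReal := by
  rw [ENNReal.toReal_ofNat]; norm_num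

lemma h2_two_ne_zero : (2 : ℝ≥0∞) ≠ 0 := by norm_num

lemma memℓp_diag {d : ℕ → ℂ} (hd : ∀ n, ‖d n‖ ≤ 1) (f : H2) :
    Memℓp (fun n => d n * f n) 2 := by
  apply memℓp_gen
  refine Summable.of_nonneg_of_le (fun n => Real.rpow_nonneg (norm_nonneg _) _)
    (fun n => ?_) ((lp.memℓp f).summable h2_toReal_pos)
  apply Real.rpow_le_rpow (norm_nonneg _) ?_ (le_of_lt h2_toReal_pos)
  rw [norm_mul]
  calc ‖d n‖ * ‖f n‖ ≤ 1 * ‖f n‖ := mul_le_mul_of_nonneg_right (hd n) (norm_nonneg _)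
    _ = ‖f n‖ := one_mul _

/-- Diagonal multiplication operator on `H²` by a sequence bounded by 1. -/
def diagOp (d : ℕ → ℂ) (hd : ∀ n, ‖d n‖ ≤ 1) : H2 →L[ℂ] H2 :=
  LinearMap.mkContinuous
    { toFun := fun f => (⟨fun n => d n * f n, memℓp_diag hd f⟩ : H2)
      map_add' := fun f g => by
        apply lp.ext; funext n
        simp only [lp.coeFn_add, Pi.add_apply]
        show d n * ((f : ℕ → ℂ) + (g : ℕ → ℂ)) n = d n * f n + d n * g n
        simp [mul_add]
      map_smul' := fun a f => by
        apply lp.ext; funext n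
        simp only [lp.coeFn_smul, Pi.smul_apply, RingHom.id_apply, smul_eq_mul]
        show d n * (a • (f : ℕ → ℂ)) n = a * (d n * f n)
        simp [smul_eq_mul]; ring }
    1 (fun f => by
      rw [one_mul]
      apply lp.norm_le_of_forall_sum_le h2_toReal_pos (norm_nonneg f)
      intro s
      calc ∑ i ∈ s, ‖d i * f i‖ ^ (2:ℝ≥0∞).toReal
          ≤ ∑ i ∈ s, ‖f i‖ ^ (2:ℝ≥0∞).toReal := by
            refine Finset.sum_le_sum fun i _ => ?_
            refine Real.rpow_le_rpow (norm_nonneg _) ?_ (le_of_lt h2_toReal_pos)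
            rw [norm_mul]
            calc ‖d i‖ * ‖f i‖ ≤ 1 * ‖f i‖ :=
                  mul_le_mul_of_nonneg_right (hd i) (norm_nonneg _)
              _ = ‖f i‖ := one_mul _
        _ ≤ ‖f‖ ^ (2:ℝ≥0∞).toReal := lp.sum_rpow_le_norm_rpow h2_toReal_pos f s)

lemma diagOp_apply (d : ℕ → ℂ) (hd : ∀ n, ‖d n‖ ≤ 1) (f : H2) (n : ℕ) :
    diagOp d hd f n = d n * f n := rfl

/-- Evaluation of the `n`-th Taylor coefficient, as a continuous linear functional. -/
def evalCLM (n : ℕ) : H2 →L[ℂ] ℂ :=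
  LinearMap.mkContinuous
    { toFun := fun f => f n
      map_add' := fun f g => by simp [lp.coeFn_add]
      map_smul' := fun a f => by simp [lp.coeFn_smul] }
    1 (fun f => by rw [one_mul]; exact lp.norm_apply_le_norm h2_two_ne_zero f n)

lemma evalCLM_apply (n : ℕ) (f : H2) : evalCLM n f = f n := rfl

end StmtAux


theorem stmt0 (lam : ℂ) (hlam : ‖lam‖ = 1)
    (B R : H2 →L[ℂ] H2) (hB : IsBackwardShift B) (hR : IsDilation lam R)
    (X : H2 →L[ℂ] H2) (hX : X ≠ 0) :
    B ∘L X = lam • (X ∘L B) ↔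
      ∃ φ : ℂ → ℂ, InHinf φ ∧ ∃ Φ : H2 →L[ℂ] H2, IsCoToeplitz φ Φ ∧ X = R ∘L Φ := by
  have hlam0 : lam ≠ 0 := by
    intro h; rw [h, norm_zero] at hlam; norm_num at hlam
  constructor
  · intro hcomm
    have hd : ∀ n : ℕ, ‖(fun m : ℕ => lam⁻¹ ^ m) n‖ ≤ 1 := by
      intro n
      simp only [norm_pow, norm_inv, hlam, inv_one, one_pow, le_refl]
    set Φ : H2 →L[ℂ] H2 := diagOp (fun m : ℕ => lam⁻¹ ^ m) hd ∘L X with hΦdef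
    have hΦ : ∀ (f : H2) (n : ℕ), Φ f n = lam⁻¹ ^ n * X f n := fun f n => rfl
    have hXshift : ∀ (f : H2) (n : ℕ), X f (n + 1) = lam * X (B f) n := by
      intro f n
      have h : ((B ∘L X) f) n = ((lam • (X ∘L B)) f) n := by rw [hcomm]
      simp only [ContinuousLinearMap.comp_apply, ContinuousLinearMap.smul_apply] at h
      rw [hB (X f) n, lp.coeFn_smul] at h
      simpa [smul_eq_mul] using h
    have hΦshift : ∀ (f : H2) (n : ℕ), Φ f (n + 1) = Φ (B f) n := by
      intro f n
      rw [hΦ, hΦ, hXshift f n, pow_succ, mul_assoc, ← mul_assoc lam⁻¹ lam,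
        inv_mul_cancel₀ hlam0, one_mul]
    obtain ⟨c, hc_def⟩ : ∃ c : ℕ → ℂ, ∀ k, c k = Φ (lp.single 2 k 1) 0 :=
      ⟨fun k => Φ (lp.single 2 k 1) 0, fun _ => rfl⟩
    have hcbound : ∀ k, ‖c k‖ ≤ ‖Φ‖ := by
      intro k
      have hns : ‖(lp.single 2 k (1:ℂ) : H2)‖ = 1 := by
        simpa using lp.norm_single (E := fun _ : ℕ => ℂ) h2_toReal_pos (fun _ : ℕ => (1:ℂ)) k
      rw [hc_def]
      calc ‖Φ (lp.single 2 k 1) 0‖ ≤ ‖Φ (lp.single 2 k 1)‖ :=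
            lp.norm_apply_le_norm h2_two_ne_zero _ 0
        _ ≤ ‖Φ‖ * ‖(lp.single 2 k (1:ℂ) : H2)‖ := Φ.le_opNorm _
        _ = ‖Φ‖ := by rw [hns, mul_one]
    have hbase : ∀ f : H2, HasSum (fun k => c k * f k) (Φ f 0) := by
      intro f
      have h1 : HasSum (fun k : ℕ => lp.single 2 k (f k)) f :=
        lp.hasSum_single (by norm_num) f
      have h2 := h1.mapL (evalCLM 0 ∘L Φ)
      have heq : (fun k => (evalCLM 0 ∘L Φ) (lp.single 2 k (f k))) = fun k => c k * f k := by
        funext k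
        have hs : (lp.single 2 k (f k) : H2) = f k • (lp.single 2 k (1:ℂ) : H2) := by
          rw [← lp.single_smul, smul_eq_mul, mul_one]
        rw [hs, map_smul, smul_eq_mul, hc_def]
        show f k * Φ (lp.single 2 k 1) 0 = Φ (lp.single 2 k 1) 0 * f k
        ring
      rw [heq] at h2
      exact h2
    have hgen : ∀ (f : H2) (n : ℕ), HasSum (fun k => c k * f (n + k)) (Φ f n) := by
      intro f n
      induction n generalizing f with
      | zero => simpa using hbase f
      | succ n ih =>
        rw [hΦshift f n]
        have heq : (fun k => c k * f (n + 1 + k)) = fun k => c k * (B f) (n + k) := by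
          funext k; rw [hB f (n + k), show n + k + 1 = n + 1 + k from by omega]
        rw [heq]
        exact ih (B f)
    obtain ⟨φ, hφdef⟩ : ∃ φ : ℂ → ℂ, ∀ z, φ z = ∑' k, c k * z ^ k :=
      ⟨fun z => ∑' k, c k * z ^ k, fun _ => rfl⟩
    have hsummable : ∀ z : ℂ, ‖z‖ < 1 → Summable fun k => c k * z ^ k := by
      intro z hz
      apply Summable.of_norm
      refine Summable.of_nonneg_of_le (fun k => norm_nonneg _) (fun k => ?_)
        ((summable_geometric_of_lt_one (norm_nonneg z) hz).mul_left ‖Φ‖)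
      rw [norm_mul, norm_pow]
      exact mul_le_mul_of_nonneg_right (hcbound k) (by positivity)
    have hφsum : ∀ z ∈ ball (0:ℂ) 1, HasSum (fun k => c k * z ^ k) (φ z) := by
      intro z hz
      rw [mem_ball_zero_iff] at hz
      rw [hφdef z]
      exact (hsummable z hz).hasSum
    have hbound : ∀ z ∈ ball (0:ℂ) 1, ‖φ z‖ ≤ ‖Φ‖ := by
      intro z hz
      rw [mem_ball_zero_iff] at hz
      have ha : ‖(starRingEnd ℂ) z‖ < 1 := by rwa [RCLike.norm_conj]
      set ka : H2 := ⟨fun n => (starRingEnd ℂ) ((starRingEnd ℂ) z) ^ n, memℓp_geom ha⟩ with hka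
      have hkacoe : ∀ m, ka m = z ^ m := by
        intro m
        show (starRingEnd ℂ) ((starRingEnd ℂ) z) ^ m = z ^ m
        rw [Complex.conj_conj]
      have hval : ∀ n, Φ ka n = z ^ n * φ z := by
        intro n
        have h1 : HasSum (fun k => c k * z ^ (n + k)) (Φ ka n) := by
          have := hgen ka n
          have heq : (fun k => c k * ka (n + k)) = fun k => c k * z ^ (n + k) := by
            funext k; rw [hkacoe]
          rwa [heq] at this
        have h2 : HasSum (fun k => c k * z ^ (n + k)) (z ^ n * φ z) := by
          have := (hφsum z (mem_ball_zero_iff.mpr hz)).mul_left (z ^ n)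
          have heq : (fun k => z ^ n * (c k * z ^ k)) = fun k => c k * z ^ (n + k) := by
            funext k; rw [pow_add]; ring
          rwa [heq] at this
        exact h1.unique h2
      have hka_eq : Φ ka = φ z • ka := by
        apply lp.ext; funext n
        rw [lp.coeFn_smul, Pi.smul_apply, smul_eq_mul, hkacoe n, hval n]
        ring
      have hle := Φ.le_opNorm ka
      rw [hka_eq, norm_smul] at hle
      have h1 : (1:ℝ) ≤ ‖ka‖ := by
        have h0 : ‖ka 0‖ = 1 := by rw [hkacoe 0, pow_zero, norm_one]
        calc (1:ℝ) = ‖ka 0‖ := h0.symm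
          _ ≤ ‖ka‖ := lp.norm_apply_le_norm h2_two_ne_zero ka 0
      exact le_of_mul_le_mul_right hle (by linarith)
    have hdiff : DifferentiableOn ℂ φ (ball (0:ℂ) 1) := by
      set p : FormalMultilinearSeries ℂ ℂ ℂ := FormalMultilinearSeries.ofScalars ℂ c with hp
      have hrad : 1 ≤ p.radius := by
        apply FormalMultilinearSeries.le_radius_of_bound p ‖Φ‖ (r := 1)
        intro n
        rw [hp, FormalMultilinearSeries.ofScalars_norm]
        simp only [NNReal.coe_one, one_pow, mul_one]
        exact hcbound n
      have hps : HasFPowerSeriesOnBall φ p 0 1 := by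
        refine ⟨hrad, by norm_num, fun {y} hy => ?_⟩
        rw [zero_add]
        have hy' : ‖y‖ < 1 := by
          rw [mem_emetric_ball_zero_iff] at hy
          rwa [← ofReal_norm, ENNReal.ofReal_lt_one] at hy
        have := hφsum y (mem_ball_zero_iff.mpr hy')
        have heq : (fun n => p n fun _ => y) = fun n => c n * y ^ n := by
          funext n
          rw [hp, FormalMultilinearSeries.ofScalars_apply_eq, smul_eq_mul]
        rwa [heq]
      have hd := hps.differentiableOn
      rwa [show ((1:ℝ≥0∞)) = ((1:ℝ≥0) : ℝ≥0∞) from rfl, Metric.emetric_ball_nnreal,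
        NNReal.coe_one] at hd
    refine ⟨φ, ⟨hdiff, ‖Φ‖, hbound⟩, Φ, ⟨c, hφsum, fun f n => hgen f n⟩, ?_⟩
    refine ContinuousLinearMap.ext fun f => lp.ext (funext fun n => ?_)
    show X f n = (R (Φ f)) n
    rw [hR (Φ f) n, hΦ f n, ← mul_assoc, ← mul_pow, mul_inv_cancel₀ hlam0, one_pow, one_mul]
  · rintro ⟨φ, hφ, Φ, ⟨c, hcφ, hcΦ⟩, rfl⟩
    refine ContinuousLinearMap.ext fun f => lp.ext (funext fun n => ?_)
    have hsh : Φ f (n + 1) = Φ (B f) n := by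
      have ha := hcΦ f (n + 1)
      have hb := hcΦ (B f) n
      have heq : (fun k => c k * (B f) (n + k)) = fun k => c k * f (n + 1 + k) := by
        funext k; rw [hB f (n + k), show n + k + 1 = n + 1 + k from by omega]
      rw [heq] at hb
      exact ha.unique hb
    show (B ((R ∘L Φ) f)) n = ((lam • ((R ∘L Φ) ∘L B)) f) n
    rw [hB ((R ∘L Φ) f) n]
    simp only [ContinuousLinearMap.comp_apply, ContinuousLinearMap.smul_apply]
    rw [lp.coeFn_smul, Pi.smul_apply, smul_eq_mul, hR (Φ f) (n + 1), hR (Φ (B f)) n,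
      hsh, pow_succ]
    ring
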